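/- Let X be a connected topological space admitting a continuous locally extremal function f : X → ℝ that is not constant. Then every network for X has cardinality at least 𝔠; in particular the network weight satisfies nw(X) ≥ 𝔠. -/

import Mathlib

open Cardinal

/-- A network for a topological space `X` is a family `N` of subsets of `X` such that
for every `x ∈ X` and every open `U ∋ x` there is `n ∈ N` with `x ∈ n ⊆ U`. -/
def IsNetwork {X : Type*} [TopologicalSpace X] (N : Set (Set X)) : Prop :=
  ∀ x : X, ∀ U : Set X, IsOpen U → x ∈ U → ∃ n ∈ N, x ∈ n ∧ n ⊆ U

/-- If a connected space admits a continuous non-constant locally extremal real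
function, then every network for it has cardinality at least `𝔠`;
i.e. `nw(X) ≥ 𝔠`. -/
theorem stmt_15 {X : Type u} [TopologicalSpace X] [ConnectedSpace X]
    (f : X → ℝ) (hcont : Continuous f)
    (hf : ∀ x : X, IsLocalMin f x ∨ IsLocalMax f x)
    (hnc : ¬ ∀ x y : X, f x = f y) :
    ∀ N : Set (Set X), IsNetwork N → Cardinal.continuum ≤ #N := by
  classical
  intro N hN
  push_neg at hnc
  obtain ⟨p, q, hpq⟩ := hnc
  set a := min (f p) (f q) with ha
  set b := max (f p) (f q) with hb
  have hab : a < b := min_lt_max.mpr hpq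
  have hrange : Set.Icc a b ⊆ Set.range f := by
    apply (isPreconnected_range hcont).Icc_subset
    · rcases min_choice (f p) (f q) with h | h
      · exact ⟨p, h.symm⟩
      · exact ⟨q, h.symm⟩
    · rcases max_choice (f p) (f q) with h | h
      · exact ⟨p, h.symm⟩
      · exact ⟨q, h.symm⟩
  have key : ∀ t : Set.Icc a b, ∃ n, n ∈ N ∧ ∃ x, x ∈ n ∧ f x = (t : ℝ) ∧
      ((∀ y ∈ n, (t : ℝ) ≤ f y) ∨ (∀ y ∈ n, f y ≤ (t : ℝ))) := by
    rintro ⟨t, ht⟩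
    obtain ⟨x, hx⟩ := hrange ht
    rcases hf x with hmin | hmax
    · obtain ⟨U, hU, hUo, hxU⟩ := eventually_nhds_iff.mp hmin
      obtain ⟨n, hnN, hxn, hnU⟩ := hN x U hUo hxU
      exact ⟨n, hnN, x, hxn, hx, Or.inl fun y hy => hx ▸ hU y (hnU hy)⟩
    · obtain ⟨U, hU, hUo, hxU⟩ := eventually_nhds_iff.mp hmax
      obtain ⟨n, hnN, hxn, hnU⟩ := hN x U hUo hxU
      exact ⟨n, hnN, x, hxn, hx, Or.inr fun y hy => hx ▸ hU y (hnU hy)⟩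
  choose n hnN x hxn hfx hdisj using key
  let g : Set.Icc a b → (↥N ⊕ ↥N) := fun t =>
    if (∀ y ∈ n t, (t : ℝ) ≤ f y) then Sum.inl ⟨n t, hnN t⟩ else Sum.inr ⟨n t, hnN t⟩
  have hg : Function.Injective g := by
    intro t s hts
    by_cases ht : ∀ y ∈ n t, (t : ℝ) ≤ f y
    · by_cases hs : ∀ y ∈ n s, (s : ℝ) ≤ f y
      · have hne : n t = n s := by
          simp only [g, if_pos ht, if_pos hs, Sum.inl.injEq, Subtype.mk.injEq] at hts
          exact hts
        apply Subtype.ext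
        have h1 : (t : ℝ) ≤ (s : ℝ) := by
          have := ht (x s) (hne ▸ hxn s); rwa [hfx s] at this
        have h2 : (s : ℝ) ≤ (t : ℝ) := by
          have := hs (x t) (hne.symm ▸ hxn t); rwa [hfx t] at this
        exact le_antisymm h1 h2
      · simp only [g, if_pos ht, if_neg hs] at hts
        exact absurd hts (by simp)
    · by_cases hs : ∀ y ∈ n s, (s : ℝ) ≤ f y
      · simp only [g, if_neg ht, if_pos hs] at hts
        exact absurd hts (by simp)
      · have hne : n t = n s := by
          simp only [g, if_neg ht, if_neg hs, Sum.inr.injEq, Subtype.mk.injEq] at hts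
          exact hts
        have ht' : ∀ y ∈ n t, f y ≤ (t : ℝ) := (hdisj t).resolve_left ht
        have hs' : ∀ y ∈ n s, f y ≤ (s : ℝ) := (hdisj s).resolve_left hs
        apply Subtype.ext
        have h1 : (s : ℝ) ≤ (t : ℝ) := by
          have := ht' (x s) (hne ▸ hxn s); rwa [hfx s] at this
        have h2 : (t : ℝ) ≤ (s : ℝ) := by
          have := hs' (x t) (hne.symm ▸ hxn t); rwa [hfx t] at this
        exact le_antisymm h2 h1
  have hle : Cardinal.continuum ≤ #(↥N ⊕ ↥N) := by
    have := Cardinal.lift_mk_le'.mpr ⟨⟨g, hg⟩⟩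
    rwa [Cardinal.mk_Icc_real hab, Cardinal.lift_continuum, Cardinal.lift_uzero] at this
  have hsum : #(↥N ⊕ ↥N) = #↥N + #↥N := by
    simp [Cardinal.mk_sum]
  rw [hsum] at hle
  have := hle.trans (Cardinal.add_le_max _ _)
  rcases le_max_iff.mp this with h | h
  · simpa using h
  · exact absurd h (not_le.mpr Cardinal.aleph0_lt_continuum)
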